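/- Let ϑ be a primitive compatible random substitution on an alphabet with at least two letters. If ϑ is globally uniquely recognisable, then the RS-subshift X_ϑ contains no shift-periodic points. -/

import Mathlib

open List

variable {A : Type*}

/-- Extension of a random substitution to words, by concatenation. -/
def substWord (θ : A → Set (List A)) : List A → Set (List A)
  | [] => {[]}
  | a :: u => {w | ∃ x ∈ θ a, ∃ y ∈ substWord θ u, w = x ++ y}

/-- The set of realisations of `θ^k` on a word. -/
def substPowWord (θ : A → Set (List A)) : ℕ → List A → Set (List A)
  | 0, u => {u}
  | (k+1), u => ⋃ v ∈ substPowWord θ k u, substWord θ v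

/-- The power `θ^k` as a random substitution. -/
def powSub (θ : A → Set (List A)) (k : ℕ) : A → Set (List A) :=
  fun a => substPowWord θ k [a]

/-- `θ` is a (finite range) random substitution: every letter has a nonempty
finite set of realisations, all of which are nonempty words. -/
def RandomSubstitution (θ : A → Set (List A)) : Prop :=
  ∀ a : A, (θ a).Nonempty ∧ (θ a).Finite ∧ ∀ w ∈ θ a, w ≠ []

/-- A word is `θ`-legal if it is a subword of a realisation of some power of
`θ` on some letter. -/
def IsLegal (θ : A → Set (List A)) (u : List A) : Prop :=
  ∃ k : ℕ, ∃ a : A, ∃ w ∈ substPowWord θ k [a], u <:+: w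

/-- `θ` has disjoint images. -/
def HasDisjointImages (θ : A → Set (List A)) : Prop :=
  ∀ u v : List A, IsLegal θ u → IsLegal θ v →
    (substWord θ u ∩ substWord θ v).Nonempty → u = v

/-- `θ` has constant length `ℓ`. -/
def ConstantLength (θ : A → Set (List A)) (ℓ : ℕ) : Prop :=
  ∀ a : A, ∀ w ∈ θ a, w.length = ℓ

/-- `θ` is compatible: abelianisations of realisations are well defined. -/
def Compatible [DecidableEq A] (θ : A → Set (List A)) : Prop :=
  ∀ a : A, ∀ u ∈ θ a, ∀ v ∈ θ a, ∀ b : A, u.count b = v.count b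

/-- `θ` is primitive. -/
def Primitive (θ : A → Set (List A)) : Prop :=
  ∃ k : ℕ, ∀ a b : A, ∃ w ∈ substPowWord θ k [a], b ∈ w

/-- The finite subword of a bi-infinite sequence starting at `i`, of length `n`. -/
def extract (x : ℤ → A) (i : ℤ) (n : ℕ) : List A :=
  (List.range n).map fun j => x (i + j)

/-- The RS-subshift of `θ`: bi-infinite sequences all of whose subwords are legal. -/
def Subshift (θ : A → Set (List A)) : Set (ℤ → A) :=
  {x | ∀ i : ℤ, ∀ n : ℕ, IsLegal θ (extract x i n)}

/-- `x` is a realisation-wise image of `y` under `θ`: there is a decomposition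
of `x` into consecutive inflation words, with a cut at the origin, the `n`-th
of which is a realisation of `θ` on `y n`. -/
def SeqImage (θ : A → Set (List A)) (y x : ℤ → A) : Prop :=
  ∃ c : ℤ → ℤ, c 0 = 0 ∧ (∀ n : ℤ, c n < c (n + 1)) ∧
    ∀ n : ℤ, extract x (c n) (c (n + 1) - c n).toNat ∈ θ (y n)

/-- `θ` is globally uniquely recognisable. -/
def GloballyUniquelyRecognisable (θ : A → Set (List A)) : Prop :=
  ∀ x ∈ Subshift θ, ∃! y : ℤ → A, y ∈ Subshift θ ∧
    ∃ k : ℕ, (∃ w ∈ θ (y 0), k < w.length) ∧ SeqImage θ y (fun n => x (n - k))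

/-- `x` has period `p` (as a natural number, acting on indices in `ℤ`). -/
def HasPeriod (x : ℤ → A) (p : ℕ) : Prop :=
  ∀ n : ℤ, x (n + p) = x n

/-- `x` is shift-periodic. -/
def IsPeriodic (x : ℤ → A) : Prop :=
  ∃ p : ℕ, 0 < p ∧ HasPeriod x p

/-- `p` is the prime (least) period of `x`. -/
def PrimePeriod (x : ℤ → A) (p : ℕ) : Prop :=
  0 < p ∧ HasPeriod x p ∧ ∀ q : ℕ, 0 < q → HasPeriod x q → p ≤ q

/-- `u` is a periodic block for `x`: up to shift, `x` is the bi-infinite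
repetition of `u`. -/
def PeriodicBlock (u : List A) (x : ℤ → A) : Prop :=
  u ≠ [] ∧ ∃ i : ℤ, ∀ n : ℤ, extract x (i + n * u.length) u.length = u

section Helpers
variable {A : Type*}

/-- Shift of a bi-infinite sequence. -/
def shiftZ (x : ℤ → A) (m : ℤ) : ℤ → A := fun n => x (n + m)

lemma extract_eq (x : ℤ → A) (i : ℤ) (n : ℕ) :
    extract x i n = (List.range n).map (fun j : ℕ => x (i + (j:ℤ))) := by
  induction n with
  | zero => rfl
  | succ n ih =>
    simp [_root_.extract]
    induction (range (n + 1)) with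
    | nil => rfl
    | cons a l ih' => simp [ih']

lemma extract_length (x : ℤ → A) (i : ℤ) (n : ℕ) : (extract x i n).length = n := by
  rw [extract_eq, List.length_map, List.length_range]

lemma extract_congr {x y : ℤ → A} {i i' : ℤ} (n : ℕ)
    (h : ∀ j : ℕ, j < n → x (i + (j:ℤ)) = y (i' + (j:ℤ))) :
    extract x i n = extract y i' n := by
  rw [extract_eq, extract_eq]
  apply List.map_congr_left
  intro j hj
  exact h j (List.mem_range.mp hj)

lemma extract_shift (x : ℤ → A) (m i : ℤ) (n : ℕ) :
    extract (shiftZ x m) i n = extract x (i + m) n := by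
  apply extract_congr
  intro j _
  show x (i + (j:ℤ) + m) = x (i + m + (j:ℤ))
  congr 1
  ring

lemma extract_one (x : ℤ → A) (i : ℤ) : extract x i 1 = [x i] := by
  rw [extract_eq, show List.range 1 = [0] from rfl, List.map_singleton]
  norm_num

lemma extract_replicate {x : ℤ → A} (hx : ∀ n : ℤ, x n = x 0) (i : ℤ) (n : ℕ) :
    extract x i n = List.replicate n (x 0) := by
  rw [extract_eq]
  rw [List.eq_replicate_iff]
  constructor
  · simp
  · intro b hb
    simp only [List.mem_map] at hb
    obtain ⟨j, _, hj⟩ := hb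
    rw [← hj, hx]

lemma shift_mem_subshift {θ : A → Set (List A)} {x : ℤ → A} (hx : x ∈ Subshift θ) (m : ℤ) :
    shiftZ x m ∈ Subshift θ := by
  intro i n
  rw [extract_shift]
  exact hx (i + m) n

lemma shiftZ_shiftZ (x : ℤ → A) (m m' : ℤ) : shiftZ (shiftZ x m) m' = shiftZ x (m + m') := by
  funext n; simp [shiftZ]; ring_nf

lemma hasPeriod_shift {x : ℤ → A} {p : ℕ} (h : HasPeriod x p) (m : ℤ) :
    HasPeriod (shiftZ x m) p := by
  intro n; simp only [shiftZ]
  have := h (n + m); rw [← this]; ring_nf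

lemma hasPeriod_mul {x : ℤ → A} {p : ℕ} (h : HasPeriod x p) (t : ℕ) :
    HasPeriod x (t * p) := by
  induction t with
  | zero => intro n; simp
  | succ t ih =>
      intro n
      have h1 := h (n + t * p)
      have h2 := ih n
      push_cast at h1 h2 ⊢
      rw [show n + (↑t + 1) * ↑p = n + ↑t * ↑p + ↑p by ring, h1, h2]

lemma period_mod {x : ℤ → A} {p q : ℕ} (hp : HasPeriod x p) (hq : HasPeriod x q) :
    HasPeriod x (p % q) := by
  intro n
  have hnat : p % q + p / q * q = p := Nat.mod_add_div' p q
  calc x (n + ↑(p % q)) = x (n + ↑(p % q) + ↑(p / q * q)) :=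
        (hasPeriod_mul hq (p / q) (n + ↑(p % q))).symm
    _ = x (n + ↑p) := by
        congr 1
        have : ((p % q : ℕ) : ℤ) + ((p / q * q : ℕ) : ℤ) = (p : ℤ) := by exact_mod_cast congrArg (Nat.cast : ℕ → ℤ) hnat
        linarith
    _ = x n := hp n

lemma const_of_period_one {x : ℤ → A} (h : HasPeriod x 1) : ∀ n : ℤ, x n = x 0 := by
  have key : ∀ n : ℤ, x (n + 1) = x n := by intro n; simpa using h n
  intro n
  induction n using Int.induction_on with
  | zero => rfl
  | succ i ih => rw [show (i:ℤ) + 1 = (i:ℤ) + 1 by ring, key i, ih]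
  | pred i ih => rw [← ih, ← key (-(i:ℤ) - 1)]; ring_nf
end Helpers
section Helpers2
set_option linter.unusedSectionVars false
variable {A : Type*}

lemma length_eq_of_compatible [DecidableEq A] {θ : A → Set (List A)} (hc : Compatible θ)
    {a : A} {u v : List A} (hu : u ∈ θ a) (hv : v ∈ θ a) : u.length = v.length := by
  have : u ~ v := (List.perm_iff_count).mpr (fun b => hc a u hu v hv b)
  exact this.length_eq

/-- Preimage data: `y` with offset `k` and cut sequence `c` decomposes `x`. -/
def PreData (θ : A → Set (List A)) (x y : ℤ → A) (k : ℕ) (c : ℤ → ℤ) : Prop :=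
  y ∈ Subshift θ ∧ (∃ w ∈ θ (y 0), k < w.length) ∧ c 0 = 0 ∧ (∀ n : ℤ, c n < c (n + 1)) ∧
    ∀ n : ℤ, extract (fun i => x (i - k)) (c n) (c (n + 1) - c n).toNat ∈ θ (y n)

lemma predata_of_rec {θ : A → Set (List A)} {x y : ℤ → A}
    (h : y ∈ Subshift θ ∧ ∃ k : ℕ, (∃ w ∈ θ (y 0), k < w.length) ∧
      SeqImage θ y (fun n => x (n - k))) :
    ∃ k c, PreData θ x y k c := by
  obtain ⟨hy, k, hk, c, hc0, hmono, hblock⟩ := h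
  exact ⟨k, c, hy, hk, hc0, hmono, hblock⟩

lemma rec_of_predata {θ : A → Set (List A)} {x y : ℤ → A} {k : ℕ} {c : ℤ → ℤ}
    (h : PreData θ x y k c) :
    y ∈ Subshift θ ∧ ∃ k : ℕ, (∃ w ∈ θ (y 0), k < w.length) ∧
      SeqImage θ y (fun n => x (n - k)) := by
  obtain ⟨hy, hk, hc0, hmono, hblock⟩ := h
  exact ⟨hy, k, hk, c, hc0, hmono, hblock⟩

section CFacts
variable [DecidableEq A] {θ : A → Set (List A)} {x y : ℤ → A} {k : ℕ} {c : ℤ → ℤ}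
  {ℓ : A → ℕ} (hc : Compatible θ)
  (hℓ : ∀ a : A, ∀ w ∈ θ a, w.length = ℓ a)
  (hd : PreData θ x y k c)

include hd

lemma c_strictMono : StrictMono c :=
  strictMono_int_of_lt_succ hd.2.2.2.1

include hℓ in
lemma c_succ_eq : ∀ n : ℤ, c (n + 1) = c n + ℓ (y n) := by
  intro n
  have hb := hd.2.2.2.2 n
  have hlen := hℓ (y n) _ hb
  rw [extract_length] at hlen
  have hlt := hd.2.2.2.1 n
  omega

include hℓ in
lemma k_lt_ell : k < ℓ (y 0) := by
  obtain ⟨w, hw, hkw⟩ := hd.2.1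
  rwa [hℓ _ _ hw] at hkw

lemma c_ge_self : ∀ n : ℤ, 0 ≤ n → n ≤ c n := by
  have h0 : c 0 = 0 := hd.2.2.1
  have hstep := hd.2.2.2.1
  intro n hn
  induction n using Int.induction_on with
  | zero => omega
  | succ i ih =>
    have := hstep i
    have := ih (by positivity)
    omega
  | pred i ih => omega

/-- Every nonnegative position lies in a unique block. -/
lemma exists_block (v : ℤ) (hv : 0 ≤ v) : ∃ m : ℤ, 0 ≤ m ∧ c m ≤ v ∧ v < c (m + 1) := by
  have h0 : c 0 = 0 := hd.2.2.1
  have hstep := hd.2.2.2.1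
  have key : ∃ n : ℕ, v < c ((n : ℤ) + 1) := by
    refine ⟨v.toNat, ?_⟩
    have := c_ge_self hd ((v.toNat : ℤ) + 1) (by positivity)
    omega
  classical
  have hspec : v < c ((Nat.find key : ℤ) + 1) := Nat.find_spec key
  refine ⟨(Nat.find key : ℤ), by positivity, ?_, hspec⟩
  rcases Nat.eq_zero_or_pos (Nat.find key) with h | h
  · rw [h]; push_cast; omega
  · have hmin := Nat.find_min key (m := Nat.find key - 1) (by omega)
    push_neg at hmin
    have hcast : ((Nat.find key - 1 : ℕ) : ℤ) + 1 = (Nat.find key : ℤ) := by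
      push_cast [h]
      omega
    rw [hcast] at hmin
    omega

end CFacts
end Helpers2
section Helpers3
set_option linter.unusedSectionVars false
variable {A : Type*} [DecidableEq A] {θ : A → Set (List A)} {x y : ℤ → A} {k : ℕ} {c : ℤ → ℤ}
  {ℓ : A → ℕ}

lemma predata_shift (hθ : RandomSubstitution θ)
    (hℓ : ∀ a : A, ∀ w ∈ θ a, w.length = ℓ a)
    (hd : PreData θ x y k c) (J : ℤ) (hJ : 0 ≤ J) :
    ∃ m : ℤ, 0 ≤ m ∧ c m ≤ J + k ∧ J + k < c (m + 1) ∧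
      PreData θ (shiftZ x J) (shiftZ y m) (J + k - c m).toNat (fun n => c (n + m) - c m) := by
  obtain ⟨m, hm0, hml, hmr⟩ := exists_block hd (J + k) (by positivity)
  have hksub : ((J + ↑k - c m).toNat : ℤ) = J + ↑k - c m := Int.toNat_of_nonneg (by omega)
  refine ⟨m, hm0, hml, hmr, shift_mem_subshift hd.1 m, ?_, ?_, ?_, ?_⟩
  · obtain ⟨w, hw⟩ := (hθ (y m)).1
    refine ⟨w, ?_, ?_⟩
    · show w ∈ θ (y (0 + m))
      rwa [zero_add]
    · have h1 := hℓ _ _ hw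
      have h2 := c_succ_eq hℓ hd m
      omega
  · show c (0 + m) - c m = 0
    rw [zero_add]; ring
  · intro n
    show c (n + m) - c m < c (n + 1 + m) - c m
    have h1 := hd.2.2.2.1 (n + m)
    have hidx : n + 1 + m = n + m + 1 := by ring
    rw [hidx]
    omega
  · intro n
    show extract _ (c (n + m) - c m) ((c (n + 1 + m) - c m - (c (n + m) - c m)).toNat) ∈ θ (y (n + m))
    have hb := hd.2.2.2.2 (n + m)
    have hidx : n + 1 + m = n + m + 1 := by ring
    rw [hidx]
    have hlen : (c (n + m + 1) - c m - (c (n + m) - c m)).toNat = (c (n + m + 1) - c (n + m)).toNat := by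
      omega
    rw [hlen]
    rw [show extract (fun i => shiftZ x J (i - ((J + ↑k - c m).toNat : ℤ)))
        (c (n + m) - c m) ((c (n + m + 1) - c (n + m)).toNat)
        = extract (fun i => x (i - k)) (c (n + m)) ((c (n + m + 1) - c (n + m)).toNat) from
      extract_congr _ (fun j hj => by
        show x (c (n + m) - c m + (j:ℤ) - ((J + ↑k - c m).toNat : ℤ) + J) = x (c (n + m) + (j:ℤ) - ↑k)
        congr 1
        omega)]
    exact hb

lemma shift_eq_self_of_period {p : ℕ} (hper : HasPeriod x p) (t : ℕ) :
    shiftZ x (t * p) = x := by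
  funext n
  have := hasPeriod_mul hper t n
  simpa [shiftZ] using this

end Helpers3
section Helpers4
set_option linter.unusedSectionVars false
variable {A : Type*}

lemma sum_shift_period {f : ℤ → ℕ} {q : ℕ} (hf : ∀ n : ℤ, f (n + q) = f n) :
    ∀ n : ℤ, ∑ i ∈ Finset.range q, f (n + (i : ℤ)) = ∑ i ∈ Finset.range q, f (i : ℤ) := by
  have step : ∀ n : ℤ, ∑ i ∈ Finset.range q, f ((n + 1) + (i : ℤ))
      = ∑ i ∈ Finset.range q, f (n + (i : ℤ)) := by
    intro n
    have h1 : ∑ i ∈ Finset.range (q + 1), f (n + (i : ℤ))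
        = (∑ i ∈ Finset.range q, f (n + ((i : ℤ) + 1))) + f (n + (0:ℕ)) :=
      Finset.sum_range_succ' (fun i => f (n + (i:ℤ))) q
    have h2 : ∑ i ∈ Finset.range (q + 1), f (n + (i : ℤ))
        = (∑ i ∈ Finset.range q, f (n + (i : ℤ))) + f (n + (q:ℤ)) :=
      Finset.sum_range_succ (fun i => f (n + (i:ℤ))) q
    have h3 : ∀ i : ℕ, f (n + ((i : ℤ) + 1)) = f ((n + 1) + (i : ℤ)) := by
      intro i; congr 1; ring
    rw [Finset.sum_congr rfl (fun i _ => h3 i)] at h1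
    have h4 := hf n
    simp only [Int.natCast_zero, add_zero] at h1
    omega
  intro n
  induction n using Int.induction_on with
  | zero => simp
  | succ i ih => rw [step] ; exact ih
  | pred i ih =>
    have := step (-(i:ℤ) - 1)
    rw [show -(i:ℤ) - 1 + 1 = -(i:ℤ) from by ring] at this
    rw [← this]
    exact ih

lemma num_key {p Λ ℓ₀ k : ℕ} (hp : 0 < p) (hΛ : 0 < Λ) (hℓΛ : ℓ₀ ≤ Λ)
    (H : ∀ t : ℕ, ∃ s : ℕ, ((s:ℤ) * Λ ≤ (t:ℤ) * p + k) ∧ ((t:ℤ) * p + k < (s:ℤ) * Λ + ℓ₀)) :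
    (Λ : ℤ) < (ℓ₀ : ℤ) + Nat.gcd p Λ := by
  set P : ℤ := (p : ℤ) with hPdef
  set L : ℤ := (Λ : ℤ) with hLdef
  set g : ℤ := (Nat.gcd p Λ : ℤ) with hgdef
  have hL0 : 0 < L := Int.natCast_pos.mpr hΛ
  have hP0 : 0 < P := Int.natCast_pos.mpr hp
  have hg0 : 0 < g := Int.natCast_pos.mpr (Nat.gcd_pos_of_pos_left Λ hp)
  have hgL : g ∣ L := Int.natCast_dvd_natCast.mpr (Nat.gcd_dvd_right p Λ)
  have hgLle : g ≤ L := Int.le_of_dvd hL0 hgL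
  have hkg0 : 0 ≤ (k : ℤ) % g := Int.emod_nonneg _ (ne_of_gt hg0)
  have hkgg : (k : ℤ) % g < g := Int.emod_lt_of_pos _ hg0
  set D : ℤ := L - g + (k : ℤ) % g - k with hDdef
  have hgD : g ∣ D := by
    have h1 : (k : ℤ) % g - k = -(g * ((k : ℤ) / g)) := by
      rw [Int.emod_def]; ring
    have : D = (L - g) + ((k:ℤ) % g - k) := by ring
    rw [this, h1]
    exact dvd_add (dvd_sub hgL dvd_rfl) (dvd_neg.mpr (Dvd.intro _ rfl))
  obtain ⟨e, hDe⟩ := hgD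
  have hBez : g = P * Int.gcdA P L + L * Int.gcdB P L := by
    have := Int.gcd_eq_gcd_ab P L
    rw [hgdef, hPdef, hLdef]
    rw [← Int.gcd_natCast_natCast p Λ]
    exact_mod_cast this
  set a : ℤ := Int.gcdA P L
  set b : ℤ := Int.gcdB P L
  set t₁ : ℤ := e * a with ht₁
  have h1 : (t₁ * P) % L = D % L := by
    have : t₁ * P = D + L * (-(e * b)) := by
      have : t₁ * P = e * (P * a) := by rw [ht₁]; ring
      rw [this, show P * a = g - L * b from by linarith [hBez], hDe]
      ring
    rw [this, Int.add_mul_emod_self_left]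
  set t₂ : ℤ := t₁ % L with ht₂
  have ht₂0 : 0 ≤ t₂ := Int.emod_nonneg _ (ne_of_gt hL0)
  have h2 : (t₂ * P) % L = (t₁ * P) % L := by
    have : t₂ * P = t₁ * P + L * (-(t₁ / L * P)) := by
      rw [ht₂, Int.emod_def]; ring
    rw [this, Int.add_mul_emod_self_left]
  have hmod : (t₂ * P + k) % L = (D + k) % L :=
    Int.ModEq.add_right (k : ℤ) (h2.trans h1)
  obtain ⟨s, hs1, hs2⟩ := H t₂.toNat
  rw [Int.toNat_of_nonneg ht₂0] at hs1 hs2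
  have hv1 : (t₂ * P + k) % L = t₂ * P + k - (s:ℤ) * L := by
    have e1 : (t₂ * P + k) % L = (t₂ * P + k - (s:ℤ) * L) % L := by
      conv_lhs => rw [show t₂ * P + (k:ℤ) = (t₂ * P + k - (s:ℤ) * L) + L * s from by ring]
      rw [Int.add_mul_emod_self_left]
    rw [e1]
    exact Int.emod_eq_of_lt (by omega) (by omega)
  have hv2 : (D + k) % L = L - g + (k:ℤ) % g := by
    have hDk : D + k = L - g + (k:ℤ) % g := by rw [hDdef]; ring
    rw [hDk]
    exact Int.emod_eq_of_lt (by omega) (by omega)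
  omega

end Helpers4
section Helpers5
set_option linter.unusedSectionVars false
variable {A : Type*} [DecidableEq A] {θ : A → Set (List A)} {ℓ : A → ℕ}

lemma ell_pos (hθ : RandomSubstitution θ) (hℓ : ∀ a : A, ∀ w ∈ θ a, w.length = ℓ a)
    (a : A) : 0 < ℓ a := by
  obtain ⟨w, hw⟩ := (hθ a).1
  have h1 := (hθ a).2.2 w hw
  have h2 := hℓ a w hw
  cases w with
  | nil => exact absurd rfl h1
  | cons b u => simp at h2; omega

lemma csum_blocks {x y : ℤ → A} {k : ℕ} {c : ℤ → ℤ}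
    (hℓ : ∀ a : A, ∀ w ∈ θ a, w.length = ℓ a) (hd : PreData θ x y k c) :
    ∀ (n : ℤ) (j : ℕ), c (n + j) = c n + ∑ i ∈ Finset.range j, (ℓ (y (n + (i:ℤ))) : ℤ) := by
  intro n j
  induction j with
  | zero => simp
  | succ j ih =>
    have h1 : n + ((j:ℤ) + 1) = (n + j) + 1 := by ring
    have h2 := c_succ_eq hℓ hd (n + j)
    rw [Finset.sum_range_succ]
    push_cast
    rw [h1, h2, ih]
    push_cast
    ring

/-- The central inequality derived from unique recognisability of a periodic point. -/
lemma key_ineq {x y : ℤ → A} {k p q : ℕ} {c : ℤ → ℤ}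
    (hθ : RandomSubstitution θ) (hℓ : ∀ a : A, ∀ w ∈ θ a, w.length = ℓ a)
    (huniq : ∀ y₁ y₂ : ℤ → A,
      (y₁ ∈ Subshift θ ∧ ∃ k : ℕ, (∃ w ∈ θ (y₁ 0), k < w.length) ∧
        SeqImage θ y₁ (fun n => x (n - k))) →
      (y₂ ∈ Subshift θ ∧ ∃ k : ℕ, (∃ w ∈ θ (y₂ 0), k < w.length) ∧
        SeqImage θ y₂ (fun n => x (n - k))) → y₁ = y₂)
    (hp : 0 < p) (hper : HasPeriod x p) (hd : PreData θ x y k c)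
    (hq : 0 < q) (hqper : HasPeriod y q) (hqmin : ∀ r : ℕ, 0 < r → HasPeriod y r → q ≤ r) :
    ((∑ i ∈ Finset.range q, ℓ (y (i:ℤ))) : ℤ) <
      (ℓ (y 0) : ℤ) + Nat.gcd p (∑ i ∈ Finset.range q, ℓ (y (i:ℤ))) := by
  classical
  set Λ : ℕ := ∑ i ∈ Finset.range q, ℓ (y (i:ℤ)) with hΛdef
  have hΛpos : 0 < Λ := by
    rw [hΛdef]
    apply Finset.sum_pos
    · intro i _; exact ell_pos hθ hℓ _
    · exact ⟨0, Finset.mem_range.mpr hq⟩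
  have hℓΛ : ℓ (y 0) ≤ Λ := by
    rw [hΛdef]
    have := Finset.single_le_sum (f := fun i : ℕ => ℓ (y (i:ℤ)))
      (fun i _ => Nat.zero_le _) (Finset.mem_range.mpr hq)
    simpa using this
  -- the sum of ℓ over any q consecutive letters of y equals Λ
  have hsuminv : ∀ n : ℤ, ∑ i ∈ Finset.range q, ℓ (y (n + (i:ℤ))) = Λ := by
    intro n
    exact sum_shift_period (f := fun n => ℓ (y n)) (fun n => by show ℓ (y (n + (q:ℤ))) = ℓ (y n); rw [hqper n]) n
  -- step 1 : shifted preimages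
  have step1 : ∀ t : ℕ, ∃ m : ℤ, 0 ≤ m ∧ c m ≤ (t:ℤ) * p + k ∧ (t:ℤ) * p + k < c (m + 1) ∧
      shiftZ y m = y := by
    intro t
    obtain ⟨m, hm0, hml, hmr, hpd⟩ := predata_shift hθ hℓ hd ((t:ℤ) * p) (by positivity)
    rw [shift_eq_self_of_period hper t] at hpd
    refine ⟨m, hm0, by push_cast at hml ⊢; exact hml, by push_cast at hmr ⊢; exact hmr, ?_⟩
    exact huniq _ _ (rec_of_predata hpd) (rec_of_predata hd)
  -- step 2 : q divides any such m
  have step2 : ∀ m : ℤ, 0 ≤ m → shiftZ y m = y → (q:ℤ) ∣ m := by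
    intro m hm0 hm
    have hMper : HasPeriod y m.toNat := by
      intro n
      have := congrFun hm n
      simp only [shiftZ] at this
      rwa [Int.toNat_of_nonneg hm0]
    rcases Nat.eq_zero_or_pos m.toNat with h | h
    · have : m = 0 := by omega
      simp [this]
    · have hmod : HasPeriod y (m.toNat % q) := period_mod hMper hqper
      rcases Nat.eq_zero_or_pos (m.toNat % q) with h2 | h2
      · have : q ∣ m.toNat := Nat.dvd_of_mod_eq_zero h2
        exact Int.natCast_dvd_natCast.mpr this |>.trans (by rw [Int.toNat_of_nonneg hm0])
      · have := hqmin _ h2 hmod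
        have := Nat.mod_lt m.toNat hq
        omega
  -- c at multiples of q
  have cmul : ∀ s : ℕ, c ((q:ℤ) * s) = (s:ℤ) * Λ := by
    intro s
    induction s with
    | zero => simpa using hd.2.2.1
    | succ s ih =>
      have h1 : (q:ℤ) * ((s:ℤ) + 1) = (q:ℤ) * s + (q:ℕ) := by push_cast; ring
      have h2 := csum_blocks hℓ hd ((q:ℤ) * s) q
      have h3 : ∑ i ∈ Finset.range q, ((ℓ (y ((q:ℤ) * s + (i:ℤ)))) : ℤ) = (Λ : ℤ) := by
        rw [← Nat.cast_sum, hsuminv]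
      push_cast
      rw [h1, h2, h3, ih]
      push_cast
      ring
  -- y at multiples of q
  have ymul : ∀ s : ℕ, y ((q:ℤ) * s) = y 0 := by
    intro s
    have := hasPeriod_mul hqper s 0
    rw [zero_add] at this
    rw [show (q:ℤ) * s = ((s * q : ℕ) : ℤ) from by push_cast; ring]
    exact this
  -- hypothesis for the numeric lemma
  have H : ∀ t : ℕ, ∃ s : ℕ, ((s:ℤ) * Λ ≤ (t:ℤ) * p + k) ∧ ((t:ℤ) * p + k < (s:ℤ) * Λ + ℓ (y 0)) := by
    intro t
    obtain ⟨m, hm0, hml, hmr, hm⟩ := step1 t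
    obtain ⟨s', hs'⟩ := step2 m hm0 hm
    have hs'0 : 0 ≤ s' := by
      by_contra h
      push_neg at h
      nlinarith [Int.natCast_pos.mpr hq]
    refine ⟨s'.toNat, ?_, ?_⟩
    · have : c m = (s'.toNat : ℤ) * Λ := by
        rw [hs', show s' = ((s'.toNat : ℕ) : ℤ) from (Int.toNat_of_nonneg hs'0).symm]
        exact cmul s'.toNat
      omega
    · have hcm : c m = (s'.toNat : ℤ) * Λ := by
        rw [hs', show s' = ((s'.toNat : ℕ) : ℤ) from (Int.toNat_of_nonneg hs'0).symm]
        exact cmul s'.toNat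
      have hcm1 : c (m + 1) = c m + ℓ (y m) := c_succ_eq hℓ hd m
      have hym : y m = y 0 := by
        rw [hs', show s' = ((s'.toNat : ℕ) : ℤ) from (Int.toNat_of_nonneg hs'0).symm]
        exact ymul s'.toNat
      rw [hym] at hcm1
      omega
  have h := num_key hp hΛpos hℓΛ H
  rw [hΛdef] at h
  exact_mod_cast h

end Helpers5
section Helpers6
set_option linter.unusedSectionVars false
variable {A : Type*}

lemma shiftZ_zero (y : ℤ → A) : shiftZ y 0 = y := by
  funext n; simp [shiftZ]

lemma hasPeriod_unshift {y : ℤ → A} {m : ℤ} {r : ℕ}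
    (h : HasPeriod (shiftZ y m) r) : HasPeriod y r := by
  intro n
  have := h (n - m)
  simp only [shiftZ] at this
  rw [show n - m + (r:ℤ) + m = n + r from by ring, show n - m + m = n from by ring] at this
  exact this

lemma hasPeriod_zmul {y : ℤ → A} {q : ℕ} (h : HasPeriod y q) :
    ∀ (n d : ℤ), y (n + (q:ℤ) * d) = y n := by
  intro n d
  induction d using Int.induction_on with
  | zero => simp
  | succ i ih =>
    rw [show n + (q:ℤ) * ((i:ℤ) + 1) = (n + (q:ℤ) * i) + q from by ring, h, ih]
  | pred i ih =>
    have := h (n + (q:ℤ) * (-(i:ℤ) - 1))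
    rw [show n + (q:ℤ) * (-(i:ℤ) - 1) + (q:ℤ) = n + (q:ℤ) * (-(i:ℤ)) from by ring] at this
    have goal : y (n + (q:ℤ) * (-(i:ℤ) - 1)) = y n := this.symm.trans ih
    convert goal using 3

lemma c_id_of_unit {c : ℤ → ℤ} (h0 : c 0 = 0) (hs : ∀ n : ℤ, c (n + 1) = c n + 1) :
    ∀ n : ℤ, c n = n := by
  intro n
  induction n using Int.induction_on with
  | zero => exact h0
  | succ i ih => rw [hs, ih]
  | pred i ih =>
    have := hs (-(i:ℤ) - 1)
    rw [show -(i:ℤ) - 1 + 1 = -(i:ℤ) from by ring] at this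
    push_cast
    omega

lemma sum_all_one {q : ℕ} {f : ℕ → ℕ} (hf : ∀ i ∈ Finset.range q, 1 ≤ f i)
    (hsum : ∑ i ∈ Finset.range q, f i = q) : ∀ i ∈ Finset.range q, f i = 1 := by
  by_contra h
  push_neg at h
  obtain ⟨i₀, hi₀, hne⟩ := h
  have hlt : (1:ℕ) < f i₀ := lt_of_le_of_ne (hf i₀ hi₀) (Ne.symm hne)
  have : ∑ i ∈ Finset.range q, 1 < ∑ i ∈ Finset.range q, f i :=
    Finset.sum_lt_sum hf ⟨i₀, hi₀, hlt⟩
  simp [hsum] at this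

end Helpers6
section Helpers7
set_option linter.unusedSectionVars false
variable {A : Type*} [DecidableEq A] {θ : A → Set (List A)} {ℓ : A → ℕ}

lemma stage (hθ : RandomSubstitution θ)
    (hℓ : ∀ a : A, ∀ w ∈ θ a, w.length = ℓ a)
    (hrec : GloballyUniquelyRecognisable θ)
    {p : ℕ} (hp : 0 < p)
    (hmin : ∀ r : ℕ, 0 < r → (∃ z ∈ Subshift θ, HasPeriod z r) → p ≤ r)
    {x : ℤ → A} (hx : x ∈ Subshift θ) (hper : HasPeriod x p) :
    ∃ y, y ∈ Subshift θ ∧ HasPeriod y p ∧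
      ∃ s : ℕ, 0 < s ∧ List.replicate s (x 0) ∈ θ (y 0) := by
  classical
  obtain ⟨y, hy, hyuniq⟩ := hrec x hx
  have huniq : ∀ y₁ y₂ : ℤ → A,
      (y₁ ∈ Subshift θ ∧ ∃ k : ℕ, (∃ w ∈ θ (y₁ 0), k < w.length) ∧
        SeqImage θ y₁ (fun n => x (n - k))) →
      (y₂ ∈ Subshift θ ∧ ∃ k : ℕ, (∃ w ∈ θ (y₂ 0), k < w.length) ∧
        SeqImage θ y₂ (fun n => x (n - k))) → y₁ = y₂ :=
    fun y₁ y₂ h1 h2 => (hyuniq y₁ h1).trans (hyuniq y₂ h2).symm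
  obtain ⟨k, c, hd⟩ := predata_of_rec hy
  have hmono := c_strictMono hd
  have hc0 : c 0 = 0 := hd.2.2.1
  have hcs := c_succ_eq hℓ hd
  have hkℓ := k_lt_ell hℓ hd
  -- y is periodic
  have hper_y : ∃ M : ℕ, 0 < M ∧ HasPeriod y M := by
    set t : ℕ := (c 1).toNat with ht
    obtain ⟨m, hm0, hml, hmr, hpd⟩ := predata_shift hθ hℓ hd ((t:ℤ) * p) (by positivity)
    rw [shift_eq_self_of_period hper t] at hpd
    have hyeq : shiftZ y m = y := huniq _ _ (rec_of_predata hpd) (rec_of_predata hd)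
    have hc1 : 0 < c 1 := by
      have := hd.2.2.2.1 0
      rw [zero_add] at this
      omega
    have htc : (t:ℤ) = c 1 := Int.toNat_of_nonneg (le_of_lt hc1)
    have htp : (t:ℤ) ≤ (t:ℤ) * p := by
      nlinarith [Int.natCast_pos.mpr hp, le_of_lt hc1]
    have hm1 : 1 ≤ m := by
      have h1 : c 1 < c (m + 1) := by omega
      have := hmono.lt_iff_lt.mp h1
      omega
    refine ⟨m.toNat, by omega, ?_⟩
    intro n
    have := congrFun hyeq n
    simp only [shiftZ] at this
    rwa [Int.toNat_of_nonneg hm0]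
  set q : ℕ := Nat.find hper_y with hqdef
  obtain ⟨hq0, hqper⟩ := Nat.find_spec hper_y
  have hqmin : ∀ r : ℕ, 0 < r → HasPeriod y r → q ≤ r := fun r h1 h2 => Nat.find_le ⟨h1, h2⟩
  have hpq : p ≤ q := hmin q hq0 ⟨y, hd.1, hqper⟩
  set Λ : ℕ := ∑ i ∈ Finset.range q, ℓ (y (i:ℤ)) with hΛdef
  have hsuminv : ∀ n : ℤ, ∑ i ∈ Finset.range q, ℓ (y (n + (i:ℤ))) = Λ := by
    intro n
    exact sum_shift_period (f := fun n => ℓ (y n))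
      (fun n => by show ℓ (y (n + (q:ℤ))) = ℓ (y n); rw [hqper n]) n
  have hΛq : q ≤ Λ := by
    calc q = ∑ _i ∈ Finset.range q, 1 := by simp
    _ ≤ Λ := Finset.sum_le_sum (fun i _ => ell_pos hθ hℓ _)
  have hkey : (Λ : ℤ) < (ℓ (y 0) : ℤ) + Nat.gcd p Λ := by
    have h := key_ineq hθ hℓ huniq hp hper hd hq0 hqper hqmin
    rw [← Nat.cast_sum] at h
    exact_mod_cast h
  set G : ℕ := Nat.gcd p Λ with hGdef
  have hGp : G ≤ p := Nat.le_of_dvd hp (Nat.gcd_dvd_left p Λ)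
  rcases Nat.lt_or_ge p 2 with hp1 | hp2
  · -- case p = 1
    have hp1 : p = 1 := by omega
    have hG1 : G = 1 := by
      have : 0 < G := Nat.gcd_pos_of_pos_left Λ hp
      omega
    have hΛℓ : Λ ≤ ℓ (y 0) := by
      rw [hG1] at hkey
      exact_mod_cast by omega
    have hq1 : q = 1 := by
      by_contra h
      have hq2 : 2 ≤ q := by omega
      have hsplit : Λ = (∑ i ∈ Finset.range (q - 1), ℓ (y ((i:ℤ) + 1))) + ℓ (y 0) := by
        rw [hΛdef, show q = (q - 1) + 1 from by omega]
        have := Finset.sum_range_succ' (fun i : ℕ => ℓ (y (i:ℤ))) (q - 1)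
        simpa using this
      have hrest : q - 1 ≤ ∑ i ∈ Finset.range (q - 1), ℓ (y ((i:ℤ) + 1)) := by
        calc q - 1 = ∑ _i ∈ Finset.range (q - 1), 1 := by simp
        _ ≤ _ := Finset.sum_le_sum (fun i _ => ell_pos hθ hℓ _)
      omega
    refine ⟨y, hd.1, by rw [hp1]; exact hq1 ▸ hqper, ℓ (y 0), ell_pos hθ hℓ _, ?_⟩
    have hb := hd.2.2.2.2 0
    have hxconst : ∀ n : ℤ, x n = x 0 := const_of_period_one (hp1 ▸ hper)
    have hzc : ∀ n : ℤ, (fun i => x (i - (k:ℤ))) n = (fun i => x (i - (k:ℤ))) 0 := by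
      intro n
      simp only
      rw [hxconst (n - k), hxconst (0 - k)]
    rw [extract_replicate hzc] at hb
    have hlen : (c (0 + 1) - c 0).toNat = ℓ (y 0) := by
      have := hcs 0
      omega
    rw [hlen] at hb
    convert hb using 2
    exact (hxconst _).symm
  · -- case p ≥ 2
    have hq2 : 2 ≤ q := le_trans hp2 hpq
    -- the sweep : same inequality with any basepoint m ≥ 1
    have hsweep : ∀ m : ℕ, 1 ≤ m → (Λ : ℤ) < (ℓ (y (m:ℤ)) : ℤ) + G := by
      intro m hm
      set J : ℤ := c m - k with hJdef
      have hcm1 : c 1 ≤ c (m:ℤ) := hmono.monotone (by exact_mod_cast hm)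
      have hc1 : c 1 = ℓ (y 0) := by
        have h := hcs 0
        rw [zero_add] at h
        omega
      have hJ0 : 0 ≤ J := by omega
      obtain ⟨m', hm'0, hm'l, hm'r, hpd'⟩ := predata_shift hθ hℓ hd J hJ0
      have hJk : J + (k:ℤ) = c (m:ℤ) := by rw [hJdef]; ring
      rw [hJk] at hm'l hm'r hpd'
      have hmm : m' = (m:ℤ) := by
        have h1 : m' ≤ (m:ℤ) := by
          by_contra h
          push_neg at h
          have := hmono.lt_iff_lt.mpr h
          omega
        have h2 : (m:ℤ) < m' + 1 := hmono.lt_iff_lt.mp hm'r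
        omega
      rw [hmm] at hpd'
      have hX : shiftZ x J ∈ Subshift θ := shift_mem_subshift hx J
      obtain ⟨yy, hyy, hyyu⟩ := hrec (shiftZ x J) hX
      have huniqX : ∀ y₁ y₂ : ℤ → A,
          (y₁ ∈ Subshift θ ∧ ∃ k : ℕ, (∃ w ∈ θ (y₁ 0), k < w.length) ∧
            SeqImage θ y₁ (fun n => (shiftZ x J) (n - k))) →
          (y₂ ∈ Subshift θ ∧ ∃ k : ℕ, (∃ w ∈ θ (y₂ 0), k < w.length) ∧
            SeqImage θ y₂ (fun n => (shiftZ x J) (n - k))) → y₁ = y₂ :=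
        fun y₁ y₂ h1 h2 => (hyyu y₁ h1).trans (hyyu y₂ h2).symm
      have hXper : HasPeriod (shiftZ x J) p := hasPeriod_shift hper J
      have hYper : HasPeriod (shiftZ y (m:ℤ)) q := hasPeriod_shift hqper _
      have hYmin : ∀ r : ℕ, 0 < r → HasPeriod (shiftZ y (m:ℤ)) r → q ≤ r :=
        fun r h1 h2 => hqmin r h1 (hasPeriod_unshift h2)
      have hkey' := key_ineq hθ hℓ huniqX hp hXper hpd' hq0 hYper hYmin
      have hYsum : (∑ i ∈ Finset.range q, ℓ (shiftZ y (m:ℤ) (i:ℤ))) = Λ := by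
        rw [show (∑ i ∈ Finset.range q, ℓ (shiftZ y (m:ℤ) (i:ℤ)))
            = ∑ i ∈ Finset.range q, ℓ (y ((m:ℤ) + (i:ℤ))) from
          Finset.sum_congr rfl (fun i _ => by simp only [shiftZ]; rw [add_comm])]
        exact hsuminv (m:ℤ)
      rw [← Nat.cast_sum, hYsum] at hkey'
      have hY0 : shiftZ y (m:ℤ) 0 = y (m:ℤ) := by simp [shiftZ]
      rw [hY0] at hkey'
      exact_mod_cast hkey'
    -- pointwise : ℓ (y m) ≥ Λ - G + 1, summing gives q ≤ G and then Λ = q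
    have hsum1 : ∑ i ∈ Finset.range q, ℓ (y (1 + (i:ℤ))) = Λ := hsuminv 1
    have hlow : ∀ i ∈ Finset.range q, (Λ : ℤ) - G + 1 ≤ (ℓ (y (1 + (i:ℤ)))) := by
      intro i _
      have := hsweep (i + 1) (by omega)
      have hcast : ((i + 1 : ℕ) : ℤ) = 1 + (i:ℤ) := by push_cast; ring
      rw [hcast] at this
      omega
    have hsumlow : (q : ℤ) * ((Λ : ℤ) - G + 1) ≤ (Λ : ℤ) := by
      calc (q : ℤ) * ((Λ : ℤ) - G + 1) = ∑ _i ∈ Finset.range q, ((Λ : ℤ) - G + 1) := by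
            rw [Finset.sum_const, Finset.card_range]; ring
      _ ≤ ∑ i ∈ Finset.range q, ((ℓ (y (1 + (i:ℤ)))) : ℤ) := Finset.sum_le_sum hlow
      _ = (Λ : ℤ) := by rw [← Nat.cast_sum, hsum1]
    have hΛqZ : (q:ℤ) ≤ (Λ:ℤ) := by exact_mod_cast hΛq
    have hq0Z : (0:ℤ) < (q:ℤ) := by exact_mod_cast hq0
    have hqG : q ≤ G := by
      have h1 : ((q:ℤ) - 1) * Λ ≤ (q:ℤ) * ((G:ℤ) - 1) := by linarith [hsumlow]
      have h2 : ((q:ℤ) - 1) * q ≤ ((q:ℤ) - 1) * Λ := by nlinarith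
      have h3 : (q:ℤ) * q ≤ (q:ℤ) * G := by nlinarith
      have h4 := le_of_mul_le_mul_left h3 hq0Z
      exact_mod_cast h4
    have hqp : q = p := by omega
    have hGq : G = q := by omega
    have hΛeq : Λ = q := by
      have hGq' : (G:ℤ) = (q:ℤ) := by exact_mod_cast hGq
      have h4 : ((q:ℤ) - 1) * Λ ≤ ((q:ℤ) - 1) * q := by nlinarith [hsumlow]
      have h5 : (Λ:ℤ) ≤ (q:ℤ) := le_of_mul_le_mul_left h4 (by
        have : (2:ℤ) ≤ (q:ℤ) := by exact_mod_cast hq2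
        omega)
      have := le_antisymm (by exact_mod_cast h5) hΛq
      omega
    have hall1 : ∀ i ∈ Finset.range q, ℓ (y (1 + (i:ℤ))) = 1 := by
      apply sum_all_one
      · intro i _; exact ell_pos hθ hℓ _
      · rw [hsum1, hΛeq]
    have hℓone : ∀ n : ℤ, ℓ (y n) = 1 := by
      intro n
      have hr0 : 0 ≤ (n - 1) % q := Int.emod_nonneg _ (by exact_mod_cast hq0.ne')
      have hrq : (n - 1) % q < q := Int.emod_lt_of_pos _ (by exact_mod_cast hq0)
      have hn : n = (1 + (n - 1) % q) + (q:ℤ) * ((n - 1) / q) := by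
        have := Int.mul_ediv_add_emod (n - 1) q
        omega
      have hy' : y n = y (1 + (n - 1) % q) := by
        conv_lhs => rw [hn]
        rw [hasPeriod_zmul hqper]
      rw [hy']
      have : (1 + (n - 1) % q) = 1 + (((n - 1) % q).toNat : ℤ) := by omega
      rw [this]
      exact hall1 ((n - 1) % q).toNat (Finset.mem_range.mpr (by omega))
    have hcid : ∀ n : ℤ, c n = n := by
      apply c_id_of_unit hc0
      intro n
      rw [hcs n, hℓone n]
      norm_num
    have hk0 : k = 0 := by
      have := hℓone 0
      omega
    refine ⟨y, hd.1, by rw [← hqp]; exact hqper, 1, one_pos, ?_⟩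
    have hb := hd.2.2.2.2 0
    rw [hc0, hk0] at hb
    have hlen : (c (0 + 1) - 0).toNat = 1 := by
      rw [hcid]
      rfl
    rw [hlen] at hb
    rw [extract_one] at hb
    simpa using hb

end Helpers7
section Helpers8
set_option linter.unusedSectionVars false
variable {A : Type*} [DecidableEq A] {θ : A → Set (List A)}

lemma replicate_mem_substWord {a b : A} {s : ℕ} (h : List.replicate s a ∈ θ b) :
    ∀ N : ℕ, List.replicate (N * s) a ∈ substWord θ (List.replicate N b) := by
  intro N
  induction N with
  | zero => simp [substWord]
  | succ N ih =>
    rw [List.replicate_succ]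
    refine ⟨List.replicate s a, h, List.replicate (N * s) a, ih, ?_⟩
    rw [← List.replicate_add]
    congr 1
    ring

lemma swcount (hc : Compatible θ) (w₀ : A → List A) (hw₀ : ∀ a, w₀ a ∈ θ a) (b : A) :
    ∀ (u : List A), ∀ w ∈ substWord θ u, w.count b = (u.map fun a => (w₀ a).count b).sum := by
  intro u
  induction u with
  | nil =>
    intro w hw
    have : w = [] := hw
    simp [this]
  | cons a u ih =>
    rintro w ⟨v, hv, rest, hrest, rfl⟩
    rw [List.count_append]
    rw [ih rest hrest]
    simp only [List.map_cons, List.sum_cons]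
    congr 1
    exact hc a v hv (w₀ a) (hw₀ a) b

lemma powcount (hc : Compatible θ) (w₀ : A → List A) (hw₀ : ∀ a, w₀ a ∈ θ a) :
    ∀ (K : ℕ) (u : List A) (w₁ w₂ : List A), w₁ ∈ substPowWord θ K u →
      w₂ ∈ substPowWord θ K u → ∀ b : A, w₁.count b = w₂.count b := by
  intro K
  induction K with
  | zero =>
    intro u w₁ w₂ h1 h2 b
    have e1 : w₁ = u := h1
    have e2 : w₂ = u := h2
    rw [e1, e2]
  | succ K ih =>
    intro u w₁ w₂ h1 h2 b
    simp only [substPowWord, Set.mem_iUnion] at h1 h2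
    obtain ⟨v₁, hv₁, hw₁⟩ := h1
    obtain ⟨v₂, hv₂, hw₂⟩ := h2
    have hperm : v₁ ~ v₂ := List.perm_iff_count.mpr (fun a => ih u v₁ v₂ hv₁ hv₂ a)
    rw [swcount hc w₀ hw₀ b v₁ w₁ hw₁, swcount hc w₀ hw₀ b v₂ w₂ hw₂]
    exact (hperm.map _).sum_eq
end Helpers8

/-- a primitive compatible globally uniquely recognisable random
substitution on at least two letters has no periodic points in its subshift. -/
theorem recognisable_no_periodic [DecidableEq A] [Nontrivial A]
    (θ : A → Set (List A)) (hθ : RandomSubstitution θ)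
    (hc : Compatible θ) (hp : Primitive θ)
    (hrec : GloballyUniquelyRecognisable θ) :
    ∀ x ∈ Subshift θ, ¬ IsPeriodic x := by
  intro x hx hxper
  classical
  obtain ⟨p0, hp0, hper0⟩ := hxper
  have hex : ∃ r : ℕ, 0 < r ∧ ∃ z ∈ Subshift θ, HasPeriod z r := ⟨p0, hp0, x, hx, hper0⟩
  set p : ℕ := Nat.find hex with hpdef
  obtain ⟨hp', z0, hz0, hz0per⟩ := Nat.find_spec hex
  have hmin : ∀ r : ℕ, 0 < r → (∃ z ∈ Subshift θ, HasPeriod z r) → p ≤ r :=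
    fun r h1 h2 => Nat.find_le ⟨h1, h2⟩
  have hwex : ∀ a : A, ∃ w, w ∈ θ a := fun a => (hθ a).1
  choose w₀ hw₀ using hwex
  set ℓ : A → ℕ := fun a => (w₀ a).length with hℓdef
  have hℓ : ∀ a : A, ∀ w ∈ θ a, w.length = ℓ a :=
    fun a w hw => length_eq_of_compatible hc hw (hw₀ a)
  have hstage : ∀ z : {z : ℤ → A // z ∈ Subshift θ ∧ HasPeriod z p},
      ∃ z' : {z : ℤ → A // z ∈ Subshift θ ∧ HasPeriod z p},
        ∃ s : ℕ, 0 < s ∧ List.replicate s (z.1 0) ∈ θ (z'.1 0) := by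
    rintro ⟨z, hz, hzper⟩
    obtain ⟨y, hy1, hy2, s, hs, hmem⟩ := stage hθ hℓ hrec hp' hmin hz hzper
    exact ⟨⟨y, hy1, hy2⟩, s, hs, hmem⟩
  choose nxt ss hss hsmem using hstage
  set w : ℕ → {z : ℤ → A // z ∈ Subshift θ ∧ HasPeriod z p} :=
    fun i => nxt^[i] ⟨z0, hz0, hz0per⟩ with hwdef
  have hchain : ∀ i : ℕ, List.replicate (ss (w i)) ((w i).1 0) ∈ θ ((w (i+1)).1 0) := by
    intro i
    have h : w (i+1) = nxt (w i) := Function.iterate_succ_apply' nxt i _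
    rw [h]
    exact hsmem (w i)
  have hpow : ∀ (K i : ℕ), ∃ N : ℕ, 0 < N ∧
      List.replicate N ((w i).1 0) ∈ substPowWord θ K [((w (i+K)).1 0)] := by
    intro K
    induction K with
    | zero =>
      intro i
      refine ⟨1, one_pos, ?_⟩
      simp only [Nat.add_zero, substPowWord, List.replicate_one]
      rfl
    | succ K ih =>
      intro i
      obtain ⟨N, hN, hmemN⟩ := ih (i+1)
      refine ⟨N * ss (w i), Nat.mul_pos hN (hss _), ?_⟩
      rw [show i + (K+1) = (i+1) + K from by ring]
      simp only [substPowWord, Set.mem_iUnion]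
      exact ⟨List.replicate N ((w (i+1)).1 0), hmemN, replicate_mem_substWord (hchain i) N⟩
  obtain ⟨K, hK⟩ := hp
  obtain ⟨N, hN, hmemN⟩ := hpow K 0
  obtain ⟨b, hb⟩ := exists_ne ((w 0).1 0)
  obtain ⟨wb, hwb, hbwb⟩ := hK ((w (0+K)).1 0) b
  have hcount := powcount hc w₀ hw₀ K _ _ _ hmemN hwb b
  have h1 : (List.replicate N ((w 0).1 0)).count b = 0 := by
    rw [List.count_replicate]
    simp [Ne.symm hb]
  have h2 : 0 < wb.count b := List.count_pos_iff.mpr hbwb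
  omega
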